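/- Let R be a reduced commutative ring of characteristic p. Then the Witt vector Frobenius F : W(R) → W(R) is injective. -/
import Mathlib

theorem stmt8 (p : ℕ) [Fact p.Prime] (R : Type*) [CommRing R] [IsReduced R] [CharP R p] :
    Function.Injective (⇑(WittVector.frobenius (p := p) (R := R))) := by
  intro x y h
  ext n
  have h' := congrArg (fun v => WittVector.coeff v n) h
  simp only [WittVector.coeff_frobenius_charP] at h'
  have hz : (x.coeff n - y.coeff n) ^ p = 0 := by
    rw [sub_pow_char, h', sub_self]
  have := IsReduced.eq_zero _ ⟨p, hz⟩
  exact sub_eq_zero.mp this
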